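/- With the same setup ($[\eta_1,\eta_2]=2\eta_3$ and cyclic, $\sigma^1\centerdot\sigma^2=-2\sigma^3$ and cyclic, $\sigma^i\centerdot\sigma^i=0$), let $B = B_1\eta_1\otimes\sigma^1 + B_2\eta_2\otimes\sigma^2 + B_3\eta_3\otimes\sigma^3$. Then $[[B\centerdot B]\centerdot[B\centerdot B]] = -512 B_1^2 B_2 B_3\, \eta_1\otimes\sigma^1 - 512 B_1 B_2^2 B_3\, \eta_2\otimes\sigma^2 - 512 B_1 B_2 B_3^2\, \eta_3\otimes\sigma^3$. -/
import Mathlib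


open TensorProduct

theorem stmt_15 {L M : Type*} [LieRing L] [LieAlgebra ℝ L]
    [AddCommGroup M] [Module ℝ M]
    (D : M →ₗ[ℝ] M →ₗ[ℝ] M)  -- the product `∙` on self-dual 2-forms
    (η1 η2 η3 : L) (σ1 σ2 σ3 : M)
    (hη12 : ⁅η1, η2⁆ = (2:ℝ) • η3) (hη23 : ⁅η2, η3⁆ = (2:ℝ) • η1)
    (hη31 : ⁅η3, η1⁆ = (2:ℝ) • η2)
    (hσ12 : D σ1 σ2 = (-2:ℝ) • σ3) (hσ23 : D σ2 σ3 = (-2:ℝ) • σ1)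
    (hσ31 : D σ3 σ1 = (-2:ℝ) • σ2)
    (hσ21 : D σ2 σ1 = (2:ℝ) • σ3) (hσ32 : D σ3 σ2 = (2:ℝ) • σ1)
    (hσ13 : D σ1 σ3 = (2:ℝ) • σ2)
    (hσ11 : D σ1 σ1 = 0) (hσ22 : D σ2 σ2 = 0) (hσ33 : D σ3 σ3 = 0)
    -- the bracket `[· ∙ ·]` on `L ⊗ M`, `[ξ⊗α ∙ η⊗β] = ⁅ξ,η⁆ ⊗ (α ∙ β)`:
    (bd : (L ⊗[ℝ] M) →ₗ[ℝ] (L ⊗[ℝ] M) →ₗ[ℝ] (L ⊗[ℝ] M))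
    (hbd : ∀ (ξ η : L) (α β : M), bd (ξ ⊗ₜ α) (η ⊗ₜ β) = ⁅ξ, η⁆ ⊗ₜ (D α β))
    (B1 B2 B3 : ℝ)
    (B : L ⊗[ℝ] M)
    (hB : B = B1 • (η1 ⊗ₜ σ1) + B2 • (η2 ⊗ₜ σ2) + B3 • (η3 ⊗ₜ σ3)) :
    bd (bd B B) (bd B B) =
      (-512 * B1^2 * B2 * B3) • (η1 ⊗ₜ σ1) + (-512 * B1 * B2^2 * B3) • (η2 ⊗ₜ σ2)
        + (-512 * B1 * B2 * B3^2) • (η3 ⊗ₜ σ3) := by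
  have hη21 : ⁅η2, η1⁆ = (-2:ℝ) • η3 := by rw [← lie_skew, hη12]; module
  have hη32 : ⁅η3, η2⁆ = (-2:ℝ) • η1 := by rw [← lie_skew, hη23]; module
  have hη13 : ⁅η1, η3⁆ = (-2:ℝ) • η2 := by rw [← lie_skew, hη31]; module
  have hBB : bd B B = (-8 * B2 * B3) • (η1 ⊗ₜ σ1) + (-8 * B3 * B1) • (η2 ⊗ₜ σ2)
      + (-8 * B1 * B2) • (η3 ⊗ₜ σ3) := by
    subst hB
    simp only [map_add, map_smul, LinearMap.add_apply, LinearMap.smul_apply, hbd,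
      hη12, hη23, hη31, hη21, hη32, hη13, hσ12, hσ23, hσ31, hσ21, hσ32, hσ13,
      hσ11, hσ22, hσ33, smul_lie, lie_smul, lie_self, zero_tmul, tmul_zero, smul_zero,
      ← smul_tmul', tmul_smul, smul_smul]
    module
  rw [hBB]
  simp only [map_add, map_smul, LinearMap.add_apply, LinearMap.smul_apply, hbd,
    hη12, hη23, hη31, hη21, hη32, hη13, hσ12, hσ23, hσ31, hσ21, hσ32, hσ13,
    hσ11, hσ22, hσ33, smul_lie, lie_smul, lie_self, zero_tmul, tmul_zero, smul_zero,
    ← smul_tmul', tmul_smul, smul_smul]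
  module
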